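/- For the complete graph K_n on vertex set [n] with variables x_1,…,x_n, the k-th distance ideal I_k(K_n, X) ⊆ ℤ[x_1,…,x_n] is: for k < n, the ideal generated by the set of polynomials { ∏_{j∈I}(x_j − 1) : I ⊆ [n], |I| = k−1 }, and for k = n, the principal ideal generated by ∏_{j=1}^n (x_j − 1) + Σ_{i=1}^n ∏_{j≠i} (x_j − 1). -/

import Mathlib

open Matrix MvPolynomial

variable {V : Type*}

/-- The distance matrix of a graph: the `(u,v)` entry is the graph distance `d_G(u,v)`. -/
noncomputable def distMatrix [Fintype V] (G : SimpleGraph V) : Matrix V V ℤ :=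
  fun u v => (G.dist u v : ℤ)

/-- The transmission of a vertex: the sum of the distances to all vertices. -/
noncomputable def transmission [Fintype V] (G : SimpleGraph V) (u : V) : ℤ :=
  ∑ v, (G.dist u v : ℤ)

/-- The distance Laplacian matrix `D^L(G) = diag(tr) - D(G)`. -/
noncomputable def distLaplacian [Fintype V] [DecidableEq V] (G : SimpleGraph V) : Matrix V V ℤ :=
  Matrix.diagonal (transmission G) - distMatrix G

/-- The signless distance Laplacian matrix `D^Q(G) = diag(tr) + D(G)`. -/
noncomputable def signlessDistLaplacian [Fintype V] [DecidableEq V] (G : SimpleGraph V) : Matrix V V ℤ :=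
  Matrix.diagonal (transmission G) + distMatrix G

/-- Two integer matrices are equivalent over `ℤ` if `M = U * N * W` with `U`, `W`
invertible over `ℤ` (unimodular). -/
def MatEquivZ [Fintype V] [DecidableEq V] (M N : Matrix V V ℤ) : Prop :=
  ∃ U W : Matrix V V ℤ, IsUnit U.det ∧ IsUnit W.det ∧ M = U * N * W

/-- `f` lists the diagonal entries of the Smith normal form of `M`:
the diagonal matrix `diagonal f` is equivalent to `M` over `ℤ`, consecutive entries
divide each other, and the entries are nonnegative (normalization over `ℤ`). -/
def IsSNF {N : ℕ} (M : Matrix (Fin N) (Fin N) ℤ) (f : Fin N → ℤ) : Prop :=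
  MatEquivZ M (Matrix.diagonal f) ∧ (∀ i j : Fin N, i ≤ j → f i ∣ f j) ∧ ∀ i, 0 ≤ f i

/-- The ideal generated by the determinants of all `k × k` submatrices of `M`. -/
def minorsIdeal {R : Type*} [CommRing R] [Fintype V] (M : Matrix V V R) (k : ℕ) : Ideal R :=
  Ideal.span (Set.range fun p : (Fin k → V) × (Fin k → V) => (M.submatrix p.1 p.2).det)

/-- The generalized distance matrix `D(G, X_G) = diag(X_G) + D(G)` over `ℤ[X_G]`. -/
noncomputable def genDistMatrix [Fintype V] [DecidableEq V] (G : SimpleGraph V) :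
    Matrix V V (MvPolynomial V ℤ) :=
  Matrix.diagonal (fun u => MvPolynomial.X u) +
    (distMatrix G).map (fun a => (a : MvPolynomial V ℤ))

/-- The `k`-th distance ideal `I_k(G, X_G)`: the ideal of `ℤ[X_G]` generated by the
determinants of all `k × k` submatrices of the generalized distance matrix. -/
noncomputable def distIdeal [Fintype V] [DecidableEq V] (G : SimpleGraph V) (k : ℕ) :
    Ideal (MvPolynomial V ℤ) :=
  minorsIdeal (genDistMatrix G) k

/-! ### Auxiliary lemmas -/

/-- Determinant of `diagonal X + ones` in the generic (multivariate polynomial) case. -/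
lemma det_diag_add_ones_generic (k : ℕ) :
    (Matrix.diagonal (fun i : Fin k => (MvPolynomial.X i : MvPolynomial (Fin k) ℤ))
      + Matrix.of (fun _ _ => 1)).det
    = ∏ i, MvPolynomial.X i
      + ∑ i : Fin k, ∏ j ∈ Finset.univ.erase i, MvPolynomial.X j := by
  set S := MvPolynomial (Fin k) ℤ
  let F := FractionRing S
  have hinj : Function.Injective (algebraMap S F) := IsFractionRing.injective S F
  apply hinj
  rw [RingHom.map_det (algebraMap S F), RingHom.mapMatrix_apply]
  set a : Fin k → F := fun i => algebraMap S F (MvPolynomial.X i) with ha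
  have ha0 : ∀ i, a i ≠ 0 := by
    intro i h
    have h2 : algebraMap S F (MvPolynomial.X i) = algebraMap S F 0 := by
      simpa [ha] using h
    exact MvPolynomial.X_ne_zero i (hinj h2)
  have hmap : (Matrix.diagonal (fun i : Fin k => (MvPolynomial.X i : S))
      + Matrix.of (fun _ _ => 1)).map (algebraMap S F)
      = Matrix.diagonal a * (1 + @HMul.hMul _ _ (Matrix (Fin k) (Fin k) F) Matrix.instHMulOfFintypeOfMulOfAddCommMonoid
        (Matrix.replicateCol Unit (fun i => (a i)⁻¹)) (Matrix.replicateRow Unit 1)) := by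
    ext i j
    by_cases h : i = j
    · subst h
      simp [Matrix.mul_apply, Matrix.diagonal, Matrix.replicateCol, Matrix.replicateRow, mul_add,
        mul_inv_cancel₀ (ha0 i), Matrix.one_apply, Finset.sum_add_distrib,
        Finset.sum_ite_eq, Finset.sum_ite_eq']
      rfl
    · simp [Matrix.mul_apply, Matrix.diagonal, Matrix.replicateCol, Matrix.replicateRow, h,
      mul_inv_cancel₀ (ha0 i), Matrix.one_apply, Ne.symm h]
  rw [hmap, Matrix.det_mul, Matrix.det_diagonal, Matrix.det_one_add_replicateCol_mul_replicateRow]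
  have : ((1 : Fin k → F) ⬝ᵥ fun i => (a i)⁻¹) = ∑ i, (a i)⁻¹ := by
    simp [dotProduct]
  rw [this]
  rw [map_add, map_prod, map_sum]
  rw [mul_add, mul_one]
  congr 1
  rw [Finset.mul_sum]
  refine Finset.sum_congr rfl (fun i _ => ?_)
  rw [map_prod]
  rw [← Finset.prod_erase_mul Finset.univ a (Finset.mem_univ i), mul_assoc]
  erw [mul_inv_cancel₀ (ha0 i), mul_one]

/-- Determinant of `diagonal d + ones` over any commutative ring. -/
lemma det_diag_add_ones {R : Type*} [CommRing R] {k : ℕ} (d : Fin k → R) :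
    (Matrix.diagonal d + Matrix.of (fun _ _ => (1:R))).det
    = ∏ i, d i + ∑ i : Fin k, ∏ j ∈ Finset.univ.erase i, d j := by
  let φ : MvPolynomial (Fin k) ℤ →+* R := MvPolynomial.eval₂Hom (Int.castRingHom R) d
  have h := congrArg φ (det_diag_add_ones_generic k)
  rw [RingHom.map_det, RingHom.mapMatrix_apply] at h
  have hmap : (Matrix.diagonal (fun i : Fin k => (MvPolynomial.X i : MvPolynomial (Fin k) ℤ))
      + Matrix.of (fun _ _ => 1)).map φ = Matrix.diagonal d + Matrix.of (fun _ _ => (1:R)) := by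
    ext i j
    by_cases hij : i = j <;> simp [Matrix.diagonal, hij, φ]
  rw [hmap] at h
  rw [h, map_add, map_prod, map_sum]
  simp [φ]

/-- The partial matching between rows and columns induced by two injections. -/
noncomputable def matchEquiv {k n : ℕ} {p1 p2 : Fin k → Fin n}
    (h1 : Function.Injective p1) (h2 : Function.Injective p2) :
    {i : Fin k // p1 i ∈ Set.range p2} ≃ {j : Fin k // p2 j ∈ Set.range p1} where
  toFun x := ⟨x.2.choose, ⟨x.1, x.2.choose_spec.symm⟩⟩
  invFun x := ⟨x.2.choose, ⟨x.1, x.2.choose_spec.symm⟩⟩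
  left_inv x := by
    apply Subtype.ext
    apply h1
    rw [(⟨x.1, x.2.choose_spec.symm⟩ : p2 x.2.choose ∈ Set.range p1).choose_spec,
      x.2.choose_spec]
  right_inv x := by
    apply Subtype.ext
    apply h2
    rw [(⟨x.1, x.2.choose_spec.symm⟩ : p1 x.2.choose ∈ Set.range p2).choose_spec,
      x.2.choose_spec]

lemma matchEquiv_spec {k n : ℕ} {p1 p2 : Fin k → Fin n}
    (h1 : Function.Injective p1) (h2 : Function.Injective p2)
    (x : {i : Fin k // p1 i ∈ Set.range p2}) :
    p2 ((matchEquiv h1 h2) x) = p1 x := x.2.choose_spec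

/-- Key lemma: every `k × k` minor of the "matching + ones" matrix lies in the ideal
generated by the products over subsets of size `k - 1`. -/
lemma det_match_add_ones_mem {n k : ℕ} (hk1 : 1 ≤ k) {R : Type*} [CommRing R] (y : Fin n → R)
    (p1 p2 : Fin k → Fin n) :
    (Matrix.of (fun i j : Fin k => (if p1 i = p2 j then y (p1 i) else 0) + 1)).det ∈
      Ideal.span {p : R | ∃ s : Finset (Fin n), s.card = k - 1 ∧ p = ∏ j ∈ s, y j} := by
  classical
  by_cases h1 : Function.Injective p1
  swap
  · obtain ⟨i, i', heq, hne⟩ := Function.not_injective_iff.mp h1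
    rw [Matrix.det_zero_of_row_eq hne (funext fun j => by simp [heq])]
    exact Ideal.zero_mem _
  by_cases h2 : Function.Injective p2
  swap
  · obtain ⟨j, j', heq, hne⟩ := Function.not_injective_iff.mp h2
    rw [Matrix.det_zero_of_column_eq hne (fun i => by simp [heq])]
    exact Ideal.zero_mem _
  set I := Ideal.span {p : R | ∃ s : Finset (Fin n), s.card = k - 1 ∧ p = ∏ j ∈ s, y j} with hI
  set σ := (matchEquiv h1 h2).extendSubtype with hσ
  set d : Fin k → R := fun i => if p1 i = p2 (σ i) then y (p1 i) else 0 with hd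
  have hdy : ∀ i, p1 i = p2 (σ i) → d i = y (p1 i) := fun i h => by rw [hd]; simp [h]
  have hne' : ∀ i j : Fin k, i ≠ j → p1 i ≠ p2 (σ j) := by
    intro i j hij heq
    by_cases hj : p1 j ∈ Set.range p2
    · have : σ j = (matchEquiv h1 h2) ⟨j, hj⟩ :=
        Equiv.extendSubtype_apply_of_mem _ j hj
      rw [this, matchEquiv_spec h1 h2] at heq
      exact hij (h1 heq)
    · have := Equiv.extendSubtype_not_mem (matchEquiv h1 h2) j hj
      exact this ⟨i, heq⟩
  have hsub : (Matrix.of fun i j : Fin k =>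
        (if p1 i = p2 j then y (p1 i) else 0) + 1).submatrix id σ
      = Matrix.diagonal d + Matrix.of (fun _ _ => (1:R)) := by
    ext i j
    by_cases hij : i = j
    · subst hij; simp [Matrix.diagonal, hd]
    · simp [Matrix.diagonal, hij, hne' i j hij]
  have hdet := congrArg Matrix.det hsub
  rw [Matrix.det_permute' σ, det_diag_add_ones] at hdet
  set c : R := ∏ i, d i + ∑ i : Fin k, ∏ j ∈ Finset.univ.erase i, d j with hc
  have hcmem : c ∈ I := by
    apply Ideal.add_mem
    · by_cases hall : ∀ i, p1 i = p2 (σ i)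
      · have : ∏ i, d i = ∏ v ∈ Finset.univ.image p1, y v := by
          rw [Finset.prod_image (fun a _ b _ h => h1 h)]
          exact Finset.prod_congr rfl (fun i _ => hdy i (hall i))
        rw [this]
        have hcard : (Finset.univ.image p1).card = k := by
          rw [Finset.card_image_of_injective _ h1, Finset.card_univ, Fintype.card_fin]
        obtain ⟨t, hts, htc⟩ := Finset.exists_subset_card_eq
          (show k - 1 ≤ (Finset.univ.image p1).card by omega)
        rw [← Finset.prod_sdiff hts]
        exact Ideal.mul_mem_left _ _ (Ideal.subset_span ⟨t, htc, rfl⟩)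
      · push_neg at hall
        obtain ⟨i0, hi0⟩ := hall
        rw [Finset.prod_eq_zero (Finset.mem_univ i0) (by rw [hd]; simp [hi0])]
        exact Ideal.zero_mem _
    · apply Ideal.sum_mem
      intro i _
      by_cases hall : ∀ j ∈ Finset.univ.erase i, p1 j = p2 (σ j)
      · have : ∏ j ∈ Finset.univ.erase i, d j
            = ∏ v ∈ (Finset.univ.erase i).image p1, y v := by
          rw [Finset.prod_image (fun a _ b _ h => h1 h)]
          exact Finset.prod_congr rfl (fun j hj => hdy j (hall j hj))
        rw [this]
        refine Ideal.subset_span ⟨(Finset.univ.erase i).image p1, ?_, rfl⟩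
        rw [Finset.card_image_of_injective _ h1, Finset.card_erase_of_mem (Finset.mem_univ i),
          Finset.card_univ, Fintype.card_fin]
      · push_neg at hall
        obtain ⟨j0, hj0, hj0'⟩ := hall
        rw [Finset.prod_eq_zero hj0 (by rw [hd]; simp [hj0'])]
        exact Ideal.zero_mem _
  rcases Int.units_eq_one_or (Equiv.Perm.sign σ) with h | h <;> rw [h] at hdet
  · have : (Matrix.of fun i j : Fin k =>
        (if p1 i = p2 j then y (p1 i) else 0) + 1).det = c := by
      push_cast at hdet; linear_combination hdet
    rw [this]; exact hcmem
  · have : (Matrix.of fun i j : Fin k =>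
        (if p1 i = p2 j then y (p1 i) else 0) + 1).det = -c := by
      push_cast at hdet; linear_combination -hdet
    rw [this]; exact neg_mem hcmem

/-- Entries of the generalized distance matrix of the complete graph. -/
lemma genDistMatrix_top (n : ℕ) (i j : Fin n) :
    genDistMatrix (⊤ : SimpleGraph (Fin n)) i j
      = (if i = j then (MvPolynomial.X i - 1 : MvPolynomial (Fin n) ℤ) else 0) + 1 := by
  by_cases h : i = j
  · subst h
    simp [genDistMatrix, distMatrix, Matrix.diagonal]
  · simp [genDistMatrix, distMatrix, Matrix.diagonal, h, SimpleGraph.dist_top_of_ne h]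

lemma genDistMatrix_top_eq (n : ℕ) :
    genDistMatrix (⊤ : SimpleGraph (Fin n))
      = Matrix.diagonal (fun i => (MvPolynomial.X i - 1 : MvPolynomial (Fin n) ℤ))
        + Matrix.of (fun _ _ => 1) := by
  ext i j
  rw [genDistMatrix_top]
  by_cases h : i = j <;> simp [Matrix.diagonal, h]

lemma genDistMatrix_top_det (n : ℕ) :
    (genDistMatrix (⊤ : SimpleGraph (Fin n))).det
      = (∏ j : Fin n, (MvPolynomial.X j - 1)) +
          ∑ i : Fin n, ∏ j ∈ Finset.univ.erase i, (MvPolynomial.X j - 1) := by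
  rw [genDistMatrix_top_eq, det_diag_add_ones]

/-- The distance ideals of the complete graph `K_n`: for `1 ≤ k ≤ n`,
if `k < n` then `I_k(K_n, X)` is generated by the products `∏_{j ∈ I} (x_j - 1)` over
subsets `I` of size `k - 1`, and if `k = n` then `I_k(K_n, X)` is generated by
`∏_{j=1}^n (x_j - 1) + ∑_{i=1}^n ∏_{j ≠ i} (x_j - 1)`. -/
theorem distIdeal_completeGraph (n k : ℕ) (hk1 : 1 ≤ k) (hkn : k ≤ n) :
    (k < n →
      distIdeal (⊤ : SimpleGraph (Fin n)) k =
        Ideal.span {p : MvPolynomial (Fin n) ℤ |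
          ∃ s : Finset (Fin n), s.card = k - 1 ∧
            p = ∏ j ∈ s, (MvPolynomial.X j - 1)}) ∧
    (k = n →
      distIdeal (⊤ : SimpleGraph (Fin n)) k =
        Ideal.span {(∏ j : Fin n, (MvPolynomial.X j - 1)) +
          ∑ i : Fin n, ∏ j ∈ Finset.univ.erase i, (MvPolynomial.X j - 1)}) := by
  classical
  constructor
  · -- case k < n
    intro hlt
    apply le_antisymm
    · rw [distIdeal, minorsIdeal, Ideal.span_le]
      rintro _ ⟨⟨p1, p2⟩, rfl⟩
      dsimp only
      have hsub : (genDistMatrix (⊤ : SimpleGraph (Fin n))).submatrix p1 p2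
          = Matrix.of (fun i j : Fin k =>
              (if p1 i = p2 j then ((fun v => MvPolynomial.X v - 1) (p1 i)) else 0) + 1) := by
        ext i j
        simp only [Matrix.submatrix_apply, Matrix.of_apply]
        rw [genDistMatrix_top]
      rw [SetLike.mem_coe, hsub]
      exact det_match_add_ones_mem hk1 (fun v => MvPolynomial.X v - 1) p1 p2
    · rw [Ideal.span_le]
      rintro _ ⟨s, hs, rfl⟩
      -- pick two distinct vertices outside s
      have hcompl : 1 < sᶜ.card := by
        rw [Finset.card_compl, hs]
        simp only [Fintype.card_fin]
        omega
      obtain ⟨a, ha, b, hb, hab⟩ := Finset.one_lt_card.mp hcompl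
      rw [Finset.mem_compl] at ha hb
      set e := s.orderIsoOfFin hs with he
      set p1 : Fin k → Fin n :=
        fun i => if h : (i : ℕ) < k - 1 then (e ⟨i, h⟩ : Fin n) else a with hp1
      set p2 : Fin k → Fin n :=
        fun i => if h : (i : ℕ) < k - 1 then (e ⟨i, h⟩ : Fin n) else b with hp2
      set d : Fin k → MvPolynomial (Fin n) ℤ :=
        fun i => if h : (i : ℕ) < k - 1 then (MvPolynomial.X (e ⟨i, h⟩ : Fin n) - 1) else 0
        with hdd
      have hmem : ∀ (i : Fin (k-1)), ((e i : Fin n)) ∈ s := fun i => (e i).2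
      have hsub : (genDistMatrix (⊤ : SimpleGraph (Fin n))).submatrix p1 p2
          = Matrix.diagonal d + Matrix.of (fun _ _ => 1) := by
        ext i j
        simp only [Matrix.submatrix_apply, Matrix.add_apply, Matrix.of_apply]
        rw [genDistMatrix_top]
        congr 1
        by_cases hij : i = j
        · subst hij
          by_cases hi : (i : ℕ) < k - 1
          · simp [hp1, hp2, hdd, Matrix.diagonal, hi]
          · simp [hp1, hp2, hdd, Matrix.diagonal, hi, hab]
        · have hne : p1 i ≠ p2 j := by
            by_cases hi : (i : ℕ) < k - 1 <;> by_cases hj : (j : ℕ) < k - 1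
            · simp only [hp1, hp2, dif_pos hi, dif_pos hj]
              intro hcontra
              have := e.injective (Subtype.coe_injective hcontra)
              apply hij
              have := congrArg Fin.val this
              exact Fin.ext this
            · simp only [hp1, hp2, dif_pos hi, dif_neg hj]
              intro hcontra
              exact hb (hcontra ▸ hmem ⟨i, hi⟩)
            · simp only [hp1, hp2, dif_neg hi, dif_pos hj]
              intro hcontra
              exact ha (hcontra ▸ hmem ⟨j, hj⟩)
            · simp only [hp1, hp2, dif_neg hi, dif_neg hj]
              exact hab
          simp [hne, Matrix.diagonal, hij]
      have hlast : ((k : ℕ) - 1) < k := by omega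
      set last : Fin k := ⟨k - 1, hlast⟩ with hlastdef
      have hdlast : d last = 0 := by simp [hdd, hlastdef]
      have hltlast : ∀ j ∈ Finset.univ.erase last, (j : ℕ) < k - 1 := by
        intro j hj
        have hjne := (Finset.mem_erase.mp hj).1
        have : (j : ℕ) ≠ k - 1 := fun h => hjne (Fin.ext h)
        omega
      have hdet : ((genDistMatrix (⊤ : SimpleGraph (Fin n))).submatrix p1 p2).det
          = ∏ j ∈ s, (MvPolynomial.X j - 1) := by
        rw [hsub, det_diag_add_ones]
        rw [Finset.prod_eq_zero (Finset.mem_univ last) hdlast]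
        rw [Finset.sum_eq_single_of_mem last (Finset.mem_univ last)]
        · rw [zero_add]
          refine Finset.prod_bij
            (fun j hj => (e ⟨(j : ℕ), hltlast j hj⟩ : Fin n)) ?_ ?_ ?_ ?_
          · intro j hj
            exact hmem _
          · intro j hj j' hj' hcontra
            have h' := e.injective (Subtype.coe_injective hcontra)
            exact Fin.ext (by simpa using congrArg Fin.val h')
          · intro v hv
            refine ⟨⟨(e.symm ⟨v, hv⟩ : ℕ), by omega⟩, ?_, ?_⟩
            · refine Finset.mem_erase.mpr ⟨?_, Finset.mem_univ _⟩
              intro hcontra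
              have := congrArg Fin.val hcontra
              simp only [hlastdef] at this
              have hlt' := (e.symm ⟨v, hv⟩).2
              omega
            · dsimp only
              have h' : (⟨((⟨(e.symm ⟨v, hv⟩ : ℕ), by omega⟩ : Fin k) : ℕ),
                  hltlast _ (by
                    refine Finset.mem_erase.mpr ⟨?_, Finset.mem_univ _⟩
                    intro hcontra
                    have := congrArg Fin.val hcontra
                    simp only [hlastdef] at this
                    have hlt' := (e.symm ⟨v, hv⟩).2
                    omega)⟩ : Fin (k-1))
                  = e.symm ⟨v, hv⟩ := Fin.ext rfl
              rw [h']
              simp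
          · intro j hj
            simp only [hdd, dif_pos (hltlast j hj)]
        · intro i _ hine
          refine Finset.prod_eq_zero (Finset.mem_erase.mpr ⟨?_, Finset.mem_univ _⟩) hdlast
          exact fun hcontra => hine hcontra.symm
      rw [SetLike.mem_coe, ← hdet]
      exact Ideal.subset_span ⟨(p1, p2), rfl⟩
  · -- case k = n
    intro hkeq
    subst hkeq
    apply le_antisymm
    · rw [distIdeal, minorsIdeal, Ideal.span_le]
      rintro _ ⟨⟨p1, p2⟩, rfl⟩
      dsimp only
      rw [SetLike.mem_coe]
      by_cases h1 : Function.Injective p1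
      swap
      · obtain ⟨i, i', heq, hne⟩ := Function.not_injective_iff.mp h1
        rw [Matrix.det_zero_of_row_eq hne (funext fun j => by simp [heq])]
        exact Ideal.zero_mem _
      by_cases h2 : Function.Injective p2
      swap
      · obtain ⟨j, j', heq, hne⟩ := Function.not_injective_iff.mp h2
        rw [Matrix.det_zero_of_column_eq hne (fun i => by simp [heq])]
        exact Ideal.zero_mem _
      set e1 := Equiv.ofBijective p1 ((Finite.injective_iff_bijective).mp h1) with he1
      set e2 := Equiv.ofBijective p2 ((Finite.injective_iff_bijective).mp h2) with he2
      set τ := e1.trans e2.symm with hτ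
      have hsub : (genDistMatrix (⊤ : SimpleGraph (Fin k))).submatrix p1 p2
          = ((genDistMatrix (⊤ : SimpleGraph (Fin k))).submatrix e2 e2).submatrix τ id := by
        ext i j
        simp only [Matrix.submatrix_apply, hτ, Equiv.trans_apply, id_eq]
        rw [Equiv.apply_symm_apply]
        rfl
      rw [hsub, Matrix.det_permute τ, Matrix.det_submatrix_equiv_self, genDistMatrix_top_det]
      exact Ideal.mul_mem_left _ _ (Ideal.subset_span rfl)
    · rw [Ideal.span_le, Set.singleton_subset_iff, SetLike.mem_coe, ← genDistMatrix_top_det]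
      rw [distIdeal, minorsIdeal]
      exact Ideal.subset_span ⟨(id, id), by dsimp only; rw [Matrix.submatrix_id_id]⟩
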